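/- In the ring R, the images of a₁ and of a₃ are not zero divisors: for every r ∈ R, a₁·r = 0 implies r = 0, and a₃·r = 0 implies r = 0. -/

import Mathlib

open MvPolynomial

noncomputable section

/-- `c = a₁⁶ + a₁³a₃ + a₃²` in `P = ℤ_[2][a₁, a₃, a₆]` (with `X 0 = a₁`, `X 1 = a₃`, `X 2 = a₆`). -/
def cpoly : MvPolynomial (Fin 3) ℤ_[2] := (X 0) ^ 6 + (X 0) ^ 3 * X 1 + (X 1) ^ 2

/-- `f = a₆² + a₆·c + c² − (5/9)·a₁⁶·c` in `P`. -/
def fpoly : MvPolynomial (Fin 3) ℤ_[2] :=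
  (X 2) ^ 2 + X 2 * cpoly + cpoly ^ 2 - C (5 * Ring.inverse 9) * (X 0) ^ 6 * cpoly

/-- `R = P/(f)`, the ring of automorphic forms on the double cover `𝒴`. -/
abbrev RD : Type := MvPolynomial (Fin 3) ℤ_[2] ⧸ Ideal.span {fpoly}

/-- The image of `a₁` in `R`. -/
def b₁ : RD := Ideal.Quotient.mk _ (X 0)
/-- The image of `a₃` in `R`. -/
def b₃ : RD := Ideal.Quotient.mk _ (X 1)
/-- The image of `a₆` in `R`. -/
def b₆ : RD := Ideal.Quotient.mk _ (X 2)

/-! Auxiliary setup: view `P` as `S[X]` with `S = ℤ_[2][a₃, a₁]` (note the swap of the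
variable `a₆` with `a₁` so that `finSuccEquiv` splits off `a₆`). -/

abbrev Svr := MvPolynomial (Fin 2) ℤ_[2]

def eRE : MvPolynomial (Fin 3) ℤ_[2] ≃+* Polynomial Svr :=
  (renameEquiv ℤ_[2] (Equiv.swap 0 2)).toRingEquiv.trans (finSuccEquiv ℤ_[2] 2).toRingEquiv

lemma eRE_X (i : Fin 3) : eRE (X i) = finSuccEquiv ℤ_[2] 2 (X ((Equiv.swap 0 2) i)) := by
  simp only [eRE, RingEquiv.trans_apply, AlgEquiv.toRingEquiv_eq_coe, AlgEquiv.coe_ringEquiv,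
    renameEquiv_apply, rename_X]

lemma eRE_X0 : eRE (X 0) = Polynomial.C (X 1) := by
  rw [eRE_X, show (Equiv.swap (0:Fin 3) 2) 0 = Fin.succ 1 from by decide, finSuccEquiv_X_succ]

lemma eRE_X1 : eRE (X 1) = Polynomial.C (X 0) := by
  rw [eRE_X, show (Equiv.swap (0:Fin 3) 2) 1 = Fin.succ 0 from by decide, finSuccEquiv_X_succ]

lemma eRE_X2 : eRE (X 2) = Polynomial.X := by
  rw [eRE_X, show (Equiv.swap (0:Fin 3) 2) 2 = 0 from by decide, finSuccEquiv_X_zero]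

lemma eRE_C (a : ℤ_[2]) : eRE (C a) = Polynomial.C (C a) := by
  simp only [eRE, RingEquiv.trans_apply, AlgEquiv.toRingEquiv_eq_coe, AlgEquiv.coe_ringEquiv,
    renameEquiv_apply, rename_C]
  simp [finSuccEquiv_apply]

/-- The image of `c` in `S` (with variables swapped: `a₁ ↦ X 1`, `a₃ ↦ X 0`). -/
def c' : Svr := (X 1) ^ 6 + (X 1) ^ 3 * X 0 + (X 0) ^ 2

/-- The image of `f` in `S[X]`, a monic quadratic. -/
def f' : Polynomial Svr :=
  Polynomial.X ^ 2 + (Polynomial.C c' * Polynomial.X +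
    Polynomial.C (c' ^ 2 - C (5 * Ring.inverse 9) * (X 1) ^ 6 * c'))

set_option maxRecDepth 10000 in
lemma eRE_cpoly : eRE cpoly = Polynomial.C c' := by
  rw [cpoly, c']
  rw [map_add, map_add, map_mul, map_pow, map_pow, map_pow, eRE_X0, eRE_X1]
  rw [← Polynomial.C_pow, ← Polynomial.C_pow, ← Polynomial.C_pow, ← Polynomial.C_mul,
    ← Polynomial.C_add, ← Polynomial.C_add]

set_option maxRecDepth 10000 in
set_option maxHeartbeats 1000000 in
lemma eRE_fpoly : eRE fpoly = f' := by
  rw [fpoly]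
  rw [map_sub, map_add, map_add, map_mul, map_mul, map_mul, map_pow, map_pow, map_pow,
    eRE_X2, eRE_X0, eRE_C, eRE_cpoly]
  rw [f']
  simp only [Polynomial.C_sub, Polynomial.C_mul, Polynomial.C_pow]
  ring

lemma f'_monic : f'.Monic := by
  refine Polynomial.monic_X_pow_add ?_
  refine lt_of_le_of_lt (Polynomial.degree_linear_le) ?_
  norm_num

lemma hmap : Ideal.span {f'} = (Ideal.span {fpoly}).map (eRE : MvPolynomial (Fin 3) ℤ_[2] →+* Polynomial Svr) := by
  rw [Ideal.map_span, Set.image_singleton]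
  have h : (eRE : MvPolynomial (Fin 3) ℤ_[2] →+* Polynomial Svr) fpoly = f' := eRE_fpoly
  rw [h]

def ψ : RD ≃+* AdjoinRoot f' := Ideal.quotientEquiv _ _ eRE hmap

lemma ψ_mk (x : MvPolynomial (Fin 3) ℤ_[2]) :
    ψ (Ideal.Quotient.mk _ x) = AdjoinRoot.mk f' (eRE x) :=
  rfl

instance : NoZeroSMulDivisors Svr (AdjoinRoot f') :=
  ⟨fun h => ((AdjoinRoot.powerBasis' f'_monic).basis.smul_eq_zero).mp h⟩

lemma key (s : Svr) (hs : s ≠ 0) (r : RD)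
    (h : Ideal.Quotient.mk (Ideal.span {fpoly}) (eRE.symm (Polynomial.C s)) * r = 0) :
    r = 0 := by
  have h2 : ψ (Ideal.Quotient.mk _ (eRE.symm (Polynomial.C s))) * ψ r = 0 := by
    rw [← map_mul, h, map_zero]
  have h3 : ψ (Ideal.Quotient.mk (Ideal.span {fpoly}) (eRE.symm (Polynomial.C s)))
      = algebraMap Svr (AdjoinRoot f') s := by
    rw [ψ_mk, RingEquiv.apply_symm_apply]
    rfl
  rw [h3, ← Algebra.smul_def, smul_eq_zero] at h2
  rcases h2 with h2 | h2
  · exact absurd h2 hs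
  · exact ψ.injective (h2.trans (map_zero ψ).symm)

/-- In `R`, the images of `a₁` and `a₃` are not zero divisors. -/
theorem a₁_a₃_not_zeroDivisors :
    (∀ r : RD, b₁ * r = 0 → r = 0) ∧ (∀ r : RD, b₃ * r = 0 → r = 0) := by
  constructor
  · intro r h
    refine key (X 1) (X_ne_zero 1) r ?_
    rw [← eRE_X0, RingEquiv.symm_apply_apply]
    exact h
  · intro r h
    refine key (X 0) (X_ne_zero 0) r ?_
    rw [← eRE_X1, RingEquiv.symm_apply_apply]
    exact h
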